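/- Let f : ℝⁿ → (−∞,∞] be a proper lower semicontinuous function and x̄ a point with f(x̄) finite. Then a closed set M containing x̄ is identifiable for f at x̄ (in the slope sense) if and only if there exists no sequence of points (x_r) lying outside M converging to x̄ with f(x_r) → f(x̄) and with limiting subgradients y_r ∈ ∂f(x_r) converging to zero. -/

import Mathlib

open Filter Topology
open scoped ENNReal NNReal

/-- The slope `|∇f|(x)`: the infimum of all `δ > 0` such that `x` is a local minimizer of
`f + δ·d(·,x)`; it equals `∞` at points where `f x = ⊤`. -/
noncomputable def slopeM {X : Type*} [MetricSpace X] (f : X → EReal) (x : X) : ℝ≥0∞ :=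
  if f x = ⊤ then ⊤
  else sInf {δ : ℝ≥0∞ | ∃ c : ℝ, 0 < c ∧ δ = ENNReal.ofReal c ∧
    ∀ᶠ z in 𝓝 x, f x ≤ f z + ((c * dist z x : ℝ) : EReal)}

/-- The modulus of identifiability: `liminf_{x → xbar, x ∉ M, f(x) → f(xbar)} |∇f|(x)`. -/
noncomputable def identModulus {X : Type*} [MetricSpace X] (f : X → EReal) (M : Set X)
    (xbar : X) : ℝ≥0∞ :=
  Filter.liminf (slopeM f) (𝓝[Mᶜ] xbar ⊓ Filter.comap f (𝓝 (f xbar)))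

/-- `M` is an identifiable set for `f` at `xbar`: it is closed, contains `xbar`, and the
modulus of identifiability is strictly positive. -/
def Identifiable {X : Type*} [MetricSpace X] (f : X → EReal) (M : Set X) (xbar : X) : Prop :=
  IsClosed M ∧ xbar ∈ M ∧ 0 < identModulus f M xbar

/-- `y` is a regular (Fréchet) subgradient of `f` at `x`:
`liminf_{z → x} (f(z) − f(x) − ⟨y, z − x⟩)/‖z − x‖ ≥ 0`. -/
def RegularSubgradient {n : ℕ} (f : EuclideanSpace ℝ (Fin n) → EReal)
    (x y : EuclideanSpace ℝ (Fin n)) : Prop :=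
  f x ≠ ⊤ ∧ ∀ ε : ℝ, 0 < ε →
    ∀ᶠ z in 𝓝 x, f x + (((inner ℝ y (z - x) : ℝ) - ε * ‖z - x‖ : ℝ) : EReal) ≤ f z

/-- The limiting subdifferential `∂f(x)`: all limits of regular subgradients `y_r` at points
`x_r → x` with `f(x_r) → f(x)`. -/
def LimitingSubdiff {n : ℕ} (f : EuclideanSpace ℝ (Fin n) → EReal)
    (x : EuclideanSpace ℝ (Fin n)) : Set (EuclideanSpace ℝ (Fin n)) :=
  {y | f x ≠ ⊤ ∧ ∃ xr yr : ℕ → EuclideanSpace ℝ (Fin n),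
    (∀ r, RegularSubgradient f (xr r) (yr r)) ∧
    Tendsto xr atTop (𝓝 x) ∧ Tendsto (fun r => f (xr r)) atTop (𝓝 (f x)) ∧
    Tendsto yr atTop (𝓝 y)}

/-- `f` is primal lower nice at `xbar`. -/
def PrimalLowerNice {n : ℕ} (f : EuclideanSpace ℝ (Fin n) → EReal)
    (xbar : EuclideanSpace ℝ (Fin n)) : Prop :=
  ∃ (α β : ℝ) (U : Set (EuclideanSpace ℝ (Fin n))), U ∈ 𝓝 xbar ∧
    ∀ x ∈ U, ∀ x' ∈ U, ∀ y ∈ LimitingSubdiff f x,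
      f x + (((inner ℝ y (x' - x) : ℝ) - (α + β * ‖y‖) * ‖x' - x‖ ^ 2 : ℝ) : EReal) ≤ f x'

/-- A lower semicontinuous `EReal`-valued function attains its minimum on a compact set. -/
lemma lsc_exists_min {β : Type*} [TopologicalSpace β] [T2Space β] {s : Set β}
    (hs : IsCompact s) (hne : s.Nonempty) {g : β → EReal} (hg : LowerSemicontinuous g) :
    ∃ x ∈ s, ∀ y ∈ s, g x ≤ g y := by
  set m := sInf (g '' s) with hm
  have hle : ∀ y ∈ s, m ≤ g y := fun y hy => sInf_le (Set.mem_image_of_mem g hy)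
  rcases eq_or_ne m ⊤ with htop | htop
  · obtain ⟨x, hx⟩ := hne
    exact ⟨x, hx, fun y hy => by
      have : g y = ⊤ := top_le_iff.1 (htop ▸ hle y hy)
      rw [this]; exact le_top⟩
  · have : Nonempty {b : EReal // m < b} := ⟨⟨⊤, htop.lt_top⟩⟩
    have hint : (⋂ b : {b : EReal // m < b}, s ∩ g ⁻¹' Set.Iic b.1).Nonempty := by
      apply IsCompact.nonempty_iInter_of_directed_nonempty_isCompact_isClosed
      · rintro ⟨b₁, hb₁⟩ ⟨b₂, hb₂⟩
        refine ⟨⟨min b₁ b₂, lt_min hb₁ hb₂⟩, ?_, ?_⟩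
        · intro x hx
          exact ⟨hx.1, Set.mem_preimage.2 (Set.mem_Iic.2
            (le_trans (Set.mem_Iic.1 (Set.mem_preimage.1 hx.2)) (min_le_left _ _)))⟩
        · intro x hx
          exact ⟨hx.1, Set.mem_preimage.2 (Set.mem_Iic.2
            (le_trans (Set.mem_Iic.1 (Set.mem_preimage.1 hx.2)) (min_le_right _ _)))⟩
      · rintro ⟨b, hb⟩
        obtain ⟨v, ⟨x, hx, rfl⟩, hvb⟩ := sInf_lt_iff.1 (hm ▸ hb)
        exact ⟨x, hx, hvb.le⟩
      · exact fun b => hs.inter_right (hg.isClosed_preimage _)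
      · exact fun b => hs.isClosed.inter (hg.isClosed_preimage _)
    obtain ⟨x, hx⟩ := hint
    have hxs : x ∈ s := (Set.mem_iInter.1 hx ⟨⊤, htop.lt_top⟩).1
    refine ⟨x, hxs, fun y hy => le_trans ?_ (hle y hy)⟩
    refine le_of_forall_gt_imp_ge_of_dense fun b hb => ?_
    exact (Set.mem_iInter.1 hx ⟨b, hb⟩).2
/-- A regular subgradient bounds the slope. -/
lemma slopeM_le_of_regularSubgradient {n : ℕ} {f : EuclideanSpace ℝ (Fin n) → EReal}
    (hbot : ∀ z, f z ≠ ⊥) {x y : EuclideanSpace ℝ (Fin n)} (h : RegularSubgradient f x y)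
    {ε : ℝ} (hε : 0 < ε) : slopeM f x ≤ ENNReal.ofReal (‖y‖ + ε) := by
  rw [slopeM, if_neg h.1]
  apply sInf_le
  refine ⟨‖y‖ + ε, by positivity, rfl, ?_⟩
  filter_upwards [h.2 ε hε] with z hz
  rcases eq_or_ne (f z) ⊤ with hzt | hzt
  · rw [hzt, EReal.top_add_coe]; exact le_top
  · obtain ⟨v, hv⟩ : ∃ v : ℝ, f z = (v : EReal) := ⟨(f z).toReal, (EReal.coe_toReal hzt (hbot z)).symm⟩
    obtain ⟨a, ha⟩ : ∃ a : ℝ, f x = (a : EReal) := ⟨(f x).toReal, (EReal.coe_toReal h.1 (hbot x)).symm⟩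
    rw [ha, hv, ← EReal.coe_add] at hz ⊢
    rw [EReal.coe_le_coe_iff] at hz ⊢
    have h1 := abs_real_inner_le_norm y (z - x)
    rw [dist_eq_norm]
    nlinarith [abs_le.1 h1, norm_nonneg (z - x), norm_nonneg y]

/-- A regular subgradient belongs to the limiting subdifferential. -/
lemma regularSubgradient_mem_limitingSubdiff {n : ℕ} {f : EuclideanSpace ℝ (Fin n) → EReal}
    {x y : EuclideanSpace ℝ (Fin n)} (h : RegularSubgradient f x y) :
    y ∈ LimitingSubdiff f x :=
  ⟨h.1, fun _ => x, fun _ => y, fun _ => h, tendsto_const_nhds, tendsto_const_nhds,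
    tendsto_const_nhds⟩

/-- Key construction: if `z` is a local minimizer of `f + c‖· - z‖` on a ball, then nearby
there is a point with a regular subgradient of norm at most `2c`. -/
lemma key_construction {n : ℕ} {f : EuclideanSpace ℝ (Fin n) → EReal}
    (hlsc : LowerSemicontinuous f) (hbot : ∀ z, f z ≠ ⊥)
    {z : EuclideanSpace ℝ (Fin n)} {a c ρ η : ℝ}
    (hfz : f z = (a : EReal)) (hc : 0 < c) (hρ : 0 < ρ) (hη : 0 < η)
    (hloc : ∀ z' ∈ Metric.closedBall z ρ, f z ≤ f z' + ((c * dist z' z : ℝ) : EReal)) :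
    ∃ (w : EuclideanSpace ℝ (Fin n)) (b : ℝ) (y : EuclideanSpace ℝ (Fin n)),
      f w = (b : EReal) ∧ ‖w - z‖ ≤ η ∧ ‖w - z‖ < ρ ∧ b ≤ a ∧ a - c * η ≤ b ∧
      ‖y‖ ≤ 2 * c ∧ RegularSubgradient f w y := by
  set η' := min η (ρ / 2) with hη'def
  have hη'pos : 0 < η' := lt_min hη (by linarith)
  set K := c / η' with hKdef
  have hKpos : 0 < K := div_pos hc hη'pos
  have hKη : K * η' = c := div_mul_cancel₀ c hη'pos.ne'
  set g : EuclideanSpace ℝ (Fin n) → EReal :=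
    fun w => f w + ((K * ‖w - z‖ ^ 2 : ℝ) : EReal) with hgdef
  have hq : Continuous fun w : EuclideanSpace ℝ (Fin n) => (K * ‖w - z‖ ^ 2 : ℝ) := by
    fun_prop
  have hglsc : LowerSemicontinuous g := by
    apply hlsc.add' ((continuous_coe_real_ereal.comp hq).lowerSemicontinuous)
    intro x
    exact EReal.continuousAt_add (Or.inr (EReal.coe_ne_bot _)) (Or.inr (EReal.coe_ne_top _))
  obtain ⟨w, hwB, hwmin⟩ := lsc_exists_min (isCompact_closedBall z ρ)
    ⟨z, Metric.mem_closedBall_self hρ.le⟩ hglsc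
  have hgz : g z = (a : EReal) := by
    simp [hgdef, hfz]
  have hw1 : g w ≤ (a : EReal) := hgz ▸ hwmin z (Metric.mem_closedBall_self hρ.le)
  have hfwt : f w ≠ ⊤ := by
    intro ht
    rw [hgdef] at hw1
    simp only [ht, EReal.top_add_coe, top_le_iff] at hw1
    exact EReal.coe_ne_top a hw1
  obtain ⟨b, hb⟩ : ∃ b : ℝ, f w = (b : EReal) := ⟨(f w).toReal, (EReal.coe_toReal hfwt (hbot w)).symm⟩
  set t := ‖w - z‖ with htdef
  have ht0 : 0 ≤ t := norm_nonneg _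
  have h1 : b + K * t ^ 2 ≤ a := by
    rw [hgdef] at hw1
    simp only at hw1
    rw [hb, ← EReal.coe_add, EReal.coe_le_coe_iff] at hw1
    exact hw1
  have h2 : a ≤ b + c * t := by
    have := hloc w hwB
    rw [hfz, hb, ← EReal.coe_add, EReal.coe_le_coe_iff, dist_eq_norm] at this
    exact this
  have h3 : K * t ^ 2 ≤ c * t := by linarith
  have htη' : t ≤ η' := by
    by_contra hlt
    push_neg at hlt
    nlinarith [mul_pos (mul_pos hKpos (sub_pos.2 hlt)) (lt_trans hη'pos hlt)]
  have htη : t ≤ η := le_trans htη' (min_le_left _ _)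
  have htρ : t < ρ := lt_of_le_of_lt (le_trans htη' (min_le_right _ _)) (by linarith)
  have hble : b ≤ a := by nlinarith
  have hbge : a - c * η ≤ b := by nlinarith
  set y : EuclideanSpace ℝ (Fin n) := (2 * K) • (z - w) with hydef
  have hynorm : ‖y‖ ≤ 2 * c := by
    rw [hydef, norm_smul, norm_sub_rev]
    rw [Real.norm_eq_abs, abs_of_pos (by positivity)]
    calc 2 * K * t ≤ 2 * K * η' := by nlinarith
    _ = 2 * c := by rw [mul_assoc, hKη]
  refine ⟨w, b, y, hb, htη, htρ, hble, hbge, hynorm, hfwt, ?_⟩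
  intro ε hε
  have hrpos : 0 < min (ρ - t) (ε / K) := lt_min (by linarith) (by positivity)
  filter_upwards [Metric.ball_mem_nhds w hrpos] with z' hz'
  rw [Metric.mem_ball, dist_eq_norm] at hz'
  have hz'w : ‖z' - w‖ < ρ - t := lt_of_lt_of_le hz' (min_le_left _ _)
  have hz'K : ‖z' - w‖ < ε / K := lt_of_lt_of_le hz' (min_le_right _ _)
  have hz'B : z' ∈ Metric.closedBall z ρ := by
    rw [Metric.mem_closedBall, dist_eq_norm]
    have h4 : ‖z' - z‖ ≤ ‖z' - w‖ + ‖w - z‖ := by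
      simpa using norm_add_le (z' - w) (w - z)
    rw [← htdef] at h4
    linarith
  have hmin' : g w ≤ g z' := hwmin z' hz'B
  rcases eq_or_ne (f z') ⊤ with hzt | hzt
  · rw [hzt]; exact le_top
  · obtain ⟨v, hv⟩ : ∃ v : ℝ, f z' = (v : EReal) :=
      ⟨(f z').toReal, (EReal.coe_toReal hzt (hbot z')).symm⟩
    rw [hgdef] at hmin'
    simp only at hmin'
    rw [hb, hv, ← EReal.coe_add, ← EReal.coe_add, EReal.coe_le_coe_iff] at hmin'
    rw [hb, hv, ← EReal.coe_add, EReal.coe_le_coe_iff]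
    have hid : ‖z' - z‖ ^ 2 = ‖z' - w‖ ^ 2 + 2 * (inner ℝ (z' - w) (w - z) : ℝ) + ‖w - z‖ ^ 2 := by
      have := norm_add_sq_real (z' - w) (w - z)
      rwa [sub_add_sub_cancel] at this
    have hy : (inner ℝ y (z' - w) : ℝ) = -(2 * K * (inner ℝ (z' - w) (w - z) : ℝ)) := by
      rw [hydef, real_inner_smul_left, show z - w = -(w - z) by abel, inner_neg_left,
        real_inner_comm]
      ring
    have hK2 : K * ‖z' - w‖ ^ 2 ≤ ε * ‖z' - w‖ := by
      have h5 : K * ‖z' - w‖ ≤ ε := by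
        rw [lt_div_iff₀ hKpos] at hz'K
        linarith
      nlinarith [norm_nonneg (z' - w)]
    rw [← htdef] at hid
    nlinarith [hmin', hid, hy, hK2]

/-- Identifiability via subgradients: in Euclidean space, a closed set `M` containing `xbar`
is identifiable there if and only if no sequence outside `M` converges to `xbar` with
`f`-values converging to `f(xbar)` and limiting subgradients converging to zero. -/
theorem identifiable_iff_no_subgradient_sequence {n : ℕ}
    (f : EuclideanSpace ℝ (Fin n) → EReal)
    (hproper : ∃ z, f z ≠ ⊤) (hlsc : LowerSemicontinuous f) (hbot : ∀ z, f z ≠ ⊥)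
    (xbar : EuclideanSpace ℝ (Fin n)) (hfin : f xbar ≠ ⊤)
    (M : Set (EuclideanSpace ℝ (Fin n))) (hMcl : IsClosed M) (hmem : xbar ∈ M) :
    Identifiable f M xbar ↔
      ¬ ∃ x y : ℕ → EuclideanSpace ℝ (Fin n),
        (∀ r, x r ∉ M) ∧ Tendsto x atTop (𝓝 xbar) ∧
        Tendsto (fun r => f (x r)) atTop (𝓝 (f xbar)) ∧
        (∀ r, y r ∈ LimitingSubdiff f (x r)) ∧
        Tendsto y atTop (𝓝 (0 : EuclideanSpace ℝ (Fin n))) := by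
  set A : ℝ := (f xbar).toReal with hAdef
  have hA : f xbar = (A : EReal) := (EReal.coe_toReal hfin (hbot xbar)).symm
  have hupos : ∀ r : ℕ, (0:ℝ) < 1 / (r + 1) := fun r => by positivity
  have hulim : Tendsto (fun r : ℕ => 1 / ((r : ℝ) + 1)) atTop (𝓝 0) :=
    tendsto_one_div_add_atTop_nhds_zero_nat
  constructor
  · rintro ⟨-, -, hpos⟩ ⟨x, y, hxM, hxlim, hflim, hysub, hylim⟩
    rw [identModulus, Filter.liminf_eq] at hpos
    obtain ⟨b, hbmem, hb0⟩ := lt_sSup_iff.1 hpos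
    simp only [Set.mem_setOf_eq] at hbmem
    have hstep : ∀ r : ℕ, ∃ (z w : EuclideanSpace ℝ (Fin n)) (bz : ℝ),
        z ∉ M ∧ ‖z - x r‖ < 1 / (r + 1) ∧ f z = (bz : EReal) ∧
        |bz - (f (x r)).toReal| < 1 / (r + 1) ∧
        RegularSubgradient f z w ∧ ‖w - y r‖ < 1 / (r + 1) := by
      intro r
      obtain ⟨hne, xr, yr, hreg, hxr, hfxr, hyr⟩ := hysub r
      have h1 : ∀ᶠ k in atTop, xr k ∉ M :=
        hxr.eventually (hMcl.isOpen_compl.eventually_mem (hxM r))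
      have h2 : ∀ᶠ k in atTop, ‖xr k - x r‖ < 1 / (r + 1) := by
        filter_upwards [hxr (Metric.ball_mem_nhds (x r) (hupos r))] with k hk
        rw [← dist_eq_norm]; exact hk
      have hbk : ∀ k, f (xr k) = (((f (xr k)).toReal : ℝ) : EReal) :=
        fun k => (EReal.coe_toReal (hreg k).1 (hbot _)).symm
      have har : f (x r) = (((f (x r)).toReal : ℝ) : EReal) :=
        (EReal.coe_toReal hne (hbot _)).symm
      have hfxr' : Tendsto (fun k => (f (xr k)).toReal) atTop (𝓝 ((f (x r)).toReal)) := by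
        rw [← EReal.tendsto_coe, ← har]
        exact (tendsto_congr hbk).1 hfxr
      have h3 : ∀ᶠ k in atTop, |(f (xr k)).toReal - (f (x r)).toReal| < 1 / (r + 1) := by
        filter_upwards [hfxr' (Metric.ball_mem_nhds _ (hupos r))] with k hk
        rw [← Real.dist_eq]; exact hk
      have h4 : ∀ᶠ k in atTop, ‖yr k - y r‖ < 1 / (r + 1) := by
        filter_upwards [hyr (Metric.ball_mem_nhds (y r) (hupos r))] with k hk
        rw [← dist_eq_norm]; exact hk
      obtain ⟨k, hk1, hk2, hk3, hk4⟩ := (h1.and (h2.and (h3.and h4))).exists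
      exact ⟨xr k, yr k, (f (xr k)).toReal, hk1, hk2, hbk k, hk3, hreg k, hk4⟩
    choose z w bz hzM hzx hfz hbz hreg hwy using hstep
    have har : ∀ r, f (x r) = (((f (x r)).toReal : ℝ) : EReal) :=
      fun r => (EReal.coe_toReal (hysub r).1 (hbot _)).symm
    have haA : Tendsto (fun r => (f (x r)).toReal) atTop (𝓝 A) := by
      rw [← EReal.tendsto_coe, ← hA]
      exact (tendsto_congr har).1 hflim
    have hbzA : Tendsto bz atTop (𝓝 A) := by
      apply tendsto_iff_dist_tendsto_zero.2
      apply squeeze_zero (fun r => dist_nonneg)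
        (g := fun r => 1 / (r + 1) + dist ((f (x r)).toReal) A)
      · intro r
        have ht := dist_triangle (bz r) ((f (x r)).toReal) A
        have hb' := hbz r
        rw [Real.dist_eq (bz r) ((f (x r)).toReal)] at ht
        linarith
      · simpa using hulim.add (tendsto_iff_dist_tendsto_zero.1 haA)
    have hzlim : Tendsto z atTop (𝓝 xbar) := by
      apply tendsto_iff_dist_tendsto_zero.2
      apply squeeze_zero (fun r => dist_nonneg)
        (g := fun r => 1 / (r + 1) + dist (x r) xbar)
      · intro r
        have ht := dist_triangle (z r) (x r) xbar
        have hz' := hzx r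
        rw [dist_eq_norm (z r) (x r)] at ht
        linarith
      · simpa using hulim.add (tendsto_iff_dist_tendsto_zero.1 hxlim)
    have hfzlim : Tendsto (fun r => f (z r)) atTop (𝓝 (f xbar)) := by
      rw [hA]
      exact (tendsto_congr hfz).2 (EReal.tendsto_coe.2 hbzA)
    have hF : Tendsto z atTop (𝓝[Mᶜ] xbar ⊓ Filter.comap f (𝓝 (f xbar))) := by
      rw [tendsto_inf]
      refine ⟨tendsto_nhdsWithin_iff.2 ⟨hzlim, Filter.Eventually.of_forall hzM⟩, ?_⟩
      rw [tendsto_comap_iff]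
      exact hfzlim
    have heb : ∀ᶠ r in atTop, b ≤ slopeM f (z r) := hF.eventually hbmem
    have hsl : ∀ r : ℕ, slopeM f (z r) ≤
        ENNReal.ofReal (‖y r‖ + (1 / (r + 1) + 1 / (r + 1))) := by
      intro r
      refine le_trans (slopeM_le_of_regularSubgradient hbot (hreg r) (hupos r)) ?_
      apply ENNReal.ofReal_le_ofReal
      linarith [norm_sub_norm_le (w r) (y r), hwy r]
    have hev2 : ∀ᶠ r in atTop,
        ENNReal.ofReal (‖y r‖ + (1 / (r + 1) + 1 / (r + 1))) < b := by
      have hnorm : Tendsto (fun r : ℕ => ‖y r‖ + (1 / ((r : ℝ) + 1) + 1 / ((r : ℝ) + 1)))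
          atTop (𝓝 0) := by
        have h6 := tendsto_zero_iff_norm_tendsto_zero.1 hylim
        simpa using h6.add (hulim.add hulim)
      have h7 := ENNReal.tendsto_ofReal hnorm
      rw [ENNReal.ofReal_zero] at h7
      exact h7.eventually_lt_const hb0
    obtain ⟨r, hr1, hr2⟩ := (heb.and hev2).exists
    exact absurd (lt_of_le_of_lt (hr1.trans (hsl r)) hr2) (lt_irrefl b)
  · intro hno
    refine ⟨hMcl, hmem, ?_⟩
    by_contra h0
    have hzero : identModulus f M xbar = 0 := le_antisymm (not_lt.1 h0) zero_le
    exact hno (by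
      have hfreq : ∀ r : ℕ, ∃ᶠ u in (𝓝[Mᶜ] xbar ⊓ Filter.comap f (𝓝 (f xbar))),
          slopeM f u < ENNReal.ofReal (1 / (r + 1)) := by
        intro r
        by_contra hcon
        rw [Filter.not_frequently] at hcon
        have h8 : ENNReal.ofReal (1 / ((r : ℝ) + 1)) ≤ identModulus f M xbar := by
          rw [identModulus, Filter.liminf_eq]
          exact le_sSup (hcon.mono fun u hu => not_lt.1 hu)
        rw [hzero] at h8
        exact (ENNReal.ofReal_pos.2 (hupos r)).ne' (le_antisymm h8 zero_le)
      have hle1 : ∀ r : ℕ, 1 / ((r : ℝ) + 1) ≤ 1 := by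
        intro r
        rw [div_le_one (by positivity)]
        linarith [Nat.cast_nonneg (α := ℝ) r]
      have hstep : ∀ r : ℕ, ∃ (w yw : EuclideanSpace ℝ (Fin n)) (bw : ℝ),
          w ∉ M ∧ dist w xbar ≤ 2 * (1 / (r + 1)) ∧ f w = (bw : EReal) ∧
          |bw - A| ≤ 2 * (1 / (r + 1)) ∧ yw ∈ LimitingSubdiff f w ∧
          ‖yw‖ ≤ 2 * (1 / (r + 1)) := by
        intro r
        have hT : (Metric.ball xbar (1 / (r + 1)) ∩ Mᶜ) ∩
            f ⁻¹' ((fun t : ℝ => (t : EReal)) '' Metric.ball A (1 / (r + 1))) ∈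
            (𝓝[Mᶜ] xbar ⊓ Filter.comap f (𝓝 (f xbar))) := by
          apply Filter.inter_mem
          · apply Filter.mem_inf_of_left
            exact Filter.inter_mem (nhdsWithin_le_nhds (Metric.ball_mem_nhds _ (hupos r)))
              self_mem_nhdsWithin
          · apply Filter.mem_inf_of_right
            apply Filter.preimage_mem_comap
            rw [hA, EReal.nhds_coe]
            exact Filter.image_mem_map (Metric.ball_mem_nhds _ (hupos r))
        obtain ⟨zr, hslope, ⟨hzball, hzMc⟩, hzim⟩ :=
          ((hfreq r).and_eventually (Filter.eventually_of_mem hT fun _ h => h)).exists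
        obtain ⟨ar, harball, har⟩ := hzim
        have hne : f zr ≠ ⊤ := by
          intro ht
          rw [slopeM, if_pos ht] at hslope
          exact not_top_lt hslope
        rw [slopeM, if_neg hne] at hslope
        obtain ⟨δ, hδmem, hδlt⟩ := sInf_lt_iff.1 hslope
        obtain ⟨c, hcpos, rfl, hev⟩ := hδmem
        have hclt : c < 1 / (r + 1) := (ENNReal.ofReal_lt_ofReal_iff (hupos r)).1 hδlt
        obtain ⟨ρ₀, hρ₀pos, hρ₀⟩ := Metric.eventually_nhds_iff_ball.1 hev
        obtain ⟨ρ₁, hρ₁pos, hρ₁⟩ := Metric.isOpen_iff.1 hMcl.isOpen_compl zr hzMc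
        have hρpos : 0 < min (ρ₀ / 2) (ρ₁ / 2) := lt_min (by linarith) (by linarith)
        have hloc : ∀ z' ∈ Metric.closedBall zr (min (ρ₀ / 2) (ρ₁ / 2)),
            f zr ≤ f z' + ((c * dist z' zr : ℝ) : EReal) := by
          intro z' hz'
          apply hρ₀
          rw [Metric.mem_ball]
          calc dist z' zr ≤ min (ρ₀ / 2) (ρ₁ / 2) := hz'
          _ ≤ ρ₀ / 2 := min_le_left _ _
          _ < ρ₀ := by linarith
        obtain ⟨w, bw, yw, hfw, hwle, hwlt, hble, hbge, hynorm, hyreg⟩ :=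
          key_construction hlsc hbot har.symm hcpos hρpos (hupos r) hloc
        refine ⟨w, yw, bw, ?_, ?_, hfw, ?_,
          regularSubgradient_mem_limitingSubdiff hyreg, by linarith⟩
        · intro hwM
          refine hρ₁ ?_ hwM
          rw [Metric.mem_ball, dist_eq_norm]
          calc ‖w - zr‖ < min (ρ₀ / 2) (ρ₁ / 2) := hwlt
          _ ≤ ρ₁ / 2 := min_le_right _ _
          _ < ρ₁ := by linarith
        · calc dist w xbar ≤ dist w zr + dist zr xbar := dist_triangle _ _ _
          _ ≤ 1 / (r + 1) + 1 / (r + 1) := by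
              rw [dist_eq_norm]
              exact add_le_add hwle (le_of_lt (Metric.mem_ball.1 hzball))
          _ = 2 * (1 / (r + 1)) := by ring
        · have h9 : |ar - A| < 1 / (r + 1) := by
            rw [← Real.dist_eq]; exact Metric.mem_ball.1 harball
          have h10 : |bw - ar| ≤ c * (1 / (r + 1)) := abs_le.2 ⟨by linarith, by linarith⟩
          have h11 : c * (1 / (r + 1)) ≤ 1 / (r + 1) := by
            have := mul_le_mul_of_nonneg_right
              (le_trans hclt.le (hle1 r)) (hupos r).le
            linarith
          calc |bw - A| ≤ |bw - ar| + |ar - A| := abs_sub_le _ _ _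
          _ ≤ 2 * (1 / (r + 1)) := by linarith
      choose w yw bw h1 h2 h3 h4 h5 h6 using hstep
      have hlim2 : Tendsto (fun r : ℕ => 2 * (1 / ((r : ℝ) + 1))) atTop (𝓝 0) := by
        simpa using hulim.const_mul 2
      refine ⟨w, yw, h1, ?_, ?_, h5, ?_⟩
      · exact tendsto_iff_dist_tendsto_zero.2 (squeeze_zero (fun r => dist_nonneg) h2 hlim2)
      · have hbwA : Tendsto bw atTop (𝓝 A) := by
          apply tendsto_iff_dist_tendsto_zero.2
          apply squeeze_zero (fun r => dist_nonneg) (fun r => ?_) hlim2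
          rw [Real.dist_eq]; exact h4 r
        rw [hA]
        exact (tendsto_congr h3).2 (EReal.tendsto_coe.2 hbwA)
      · rw [tendsto_zero_iff_norm_tendsto_zero]
        exact squeeze_zero (fun r => norm_nonneg _) h6 hlim2)
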